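/- arXiv:2604.02260 — 3 statements merged into one kernel-verified Lean document; each statement's English description precedes it below -/
import Mathlib

section
/- Let Π be a nonempty type and let J, Ĵ, Σf, Σμ : Π → ℝ be functions, and let λ ≥ 0 and B ≥ 0 be real numbers. Assume that for every π ∈ Π, |Ĵ(π) − J(π)| ≤ λ·Σμ(π) + B and |Ĵ(π) − J(π)| ≤ λ·Σf(π) + B. Let π̂ ∈ Π satisfy Ĵ(π) + λ·Σμ(π) ≤ Ĵ(π̂) + λ·Σμ(π̂) for all π ∈ Π (π̂ maximizes the optimistic objective). Then for every π⋆ ∈ Π, J(π⋆) − J(π̂) ≤ λ·Σf(π̂) + λ·Σμ(π̂) + 2B. -/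
/-- Deterministic core of the optimistic regret argument:
if the model return `Ĵ` is within `λ·Smu + B` and `λ·Sf + B` of the true
return `J`, and `π̂` maximizes the optimistic objective `Ĵ + λ·Smu`, then
the regret against any comparator `π⋆` is bounded. -/
theorem optimistic_regret_core {Pol : Type*} [Nonempty Pol]
    (J Jhat Sf Smu : Pol → ℝ) (lam B : ℝ)
    (hlam : 0 ≤ lam) (hB : 0 ≤ B)
    (h1 : ∀ π : Pol, |Jhat π - J π| ≤ lam * Smu π + B)
    (h2 : ∀ π : Pol, |Jhat π - J π| ≤ lam * Sf π + B)
    (πhat : Pol)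
    (hopt : ∀ π : Pol, Jhat π + lam * Smu π ≤ Jhat πhat + lam * Smu πhat) :
    ∀ πstar : Pol,
      J πstar - J πhat ≤ lam * Sf πhat + lam * Smu πhat + 2 * B := by
  intro πstar
  have a1 := abs_le.mp (h1 πstar)
  have a2 := abs_le.mp (h2 πhat)
  have := hopt πstar
  linarith [a1.1, a2.2]
end

section
/- Let Π be a nonempty type and let J, Ĵ, Σf, Σμ : Π → ℝ be functions, and let λ ≥ 0 and B ≥ 0 be real numbers. Assume that for every π ∈ Π: (i) |Ĵ(π) − J(π)| ≤ λ·Σμ(π) + B, (ii) |Ĵ(π) − J(π)| ≤ λ·Σf(π) + B, and (iii) |Σμ(π) − Σf(π)| ≤ λ·Σf(π) + B. Let π̂ ∈ Π satisfy Ĵ(π) + λ·Σμ(π) ≤ Ĵ(π̂) + λ·Σμ(π̂) for all π ∈ Π. Then for every π⋆ ∈ Π, J(π⋆) − J(π̂) ≤ (λ² + 2λ)·Σf(π̂) + (λ + 2)·B. -/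
/-- Deterministic core of the episodic regret bound (Lemma A.2 structure):
with the additional hypothesis that the epistemic uncertainty behaves like
a bounded intrinsic reward, the regret of the optimistic policy `π̂`
against any comparator is bounded by `(λ² + 2λ)·Sf(π̂) + (λ + 2)·B`. -/
theorem episodic_regret_core {Pol : Type*} [Nonempty Pol]
    (J Jhat Sf Smu : Pol → ℝ) (lam B : ℝ)
    (hlam : 0 ≤ lam) (hB : 0 ≤ B)
    (h1 : ∀ π : Pol, |Jhat π - J π| ≤ lam * Smu π + B)
    (h2 : ∀ π : Pol, |Jhat π - J π| ≤ lam * Sf π + B)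
    (h3 : ∀ π : Pol, |Smu π - Sf π| ≤ lam * Sf π + B)
    (πhat : Pol)
    (hopt : ∀ π : Pol, Jhat π + lam * Smu π ≤ Jhat πhat + lam * Smu πhat) :
    ∀ πstar : Pol,
      J πstar - J πhat ≤ (lam ^ 2 + 2 * lam) * Sf πhat + (lam + 2) * B := by
  intro πstar
  have a1 := abs_le.mp (h1 πstar)
  have a2 := abs_le.mp (h2 πhat)
  have a3 := abs_le.mp (h3 πhat)
  have ho := hopt πstar
  nlinarith [a1.1, a1.2, a2.1, a2.2, a3.1, a3.2, mul_le_mul_of_nonneg_left a3.2 hlam]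
end

section
/- Let p ≥ 1 and Q be natural numbers, set N = Q·p, and let λ ≥ 0, c ≥ 0, G ≥ 0, P ≥ 0 be reals. Let m : ℕ → ℕ satisfy 1 ≤ m(n) ≤ n and n − m(n) ≤ p for every n with 1 ≤ n ≤ N. Let x, d, r : ℕ → ℝ satisfy: x(n) ≥ 0 and d(n) ≥ 0 for all n; for every q with 0 ≤ q < Q, ∑_{h=1}^{p} x(q·p + h)² ≤ G; ∑_{s=1}^{N−1} d(s) ≤ P; and for every n with 1 ≤ n ≤ N, r(n) ≤ (λ² + 2λ)·x(n) + (λ + 2)·c·∑_{s=m(n)}^{n−1} d(s). Then ∑_{n=1}^{N} r(n) ≤ (λ² + 2λ)·N·√(G/p) + (λ + 2)·c·p·P. -/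
open Finset

/-- Deterministic aggregation core of the main dynamic-regret theorem:
episodic regret bounds combine with the groupwise information-gain bound
and the variation budget to give the total regret bound
`(λ² + 2λ)·N·√(G/p) + (λ + 2)·c·p·P`. -/
theorem dynamic_regret_aggregation (p Q N : ℕ) (hp : 1 ≤ p) (hN : N = Q * p)
    (lam c G P : ℝ) (hlam : 0 ≤ lam) (hc : 0 ≤ c) (hG : 0 ≤ G) (hP : 0 ≤ P)
    (m : ℕ → ℕ)
    (hm : ∀ n, 1 ≤ n → n ≤ N → 1 ≤ m n ∧ m n ≤ n ∧ n - m n ≤ p)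
    (x d r : ℕ → ℝ) (hx : ∀ n, 0 ≤ x n) (hd : ∀ n, 0 ≤ d n)
    (hgrp : ∀ q, q < Q → ∑ h ∈ Finset.Icc 1 p, (x (q * p + h)) ^ 2 ≤ G)
    (hdP : ∑ s ∈ Finset.Icc 1 (N - 1), d s ≤ P)
    (hr : ∀ n, 1 ≤ n → n ≤ N →
      r n ≤ (lam ^ 2 + 2 * lam) * x n +
        (lam + 2) * c * ∑ s ∈ Finset.Icc (m n) (n - 1), d s) :
    ∑ n ∈ Finset.Icc 1 N, r n ≤
      (lam ^ 2 + 2 * lam) * (N : ℝ) * Real.sqrt (G / p) +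
        (lam + 2) * c * (p : ℝ) * P := by
  have hp0 : (0:ℝ) < p := by exact_mod_cast hp
  -- per-group bound on the sum of uncertainties, via Cauchy–Schwarz
  have hgroup : ∀ q, q < Q → ∑ h ∈ Icc 1 p, x (q * p + h) ≤ p * Real.sqrt (G / p) := by
    intro q hq
    have hnn : 0 ≤ ∑ h ∈ Icc 1 p, x (q * p + h) :=
      Finset.sum_nonneg fun _ _ => hx _
    have h1 : (∑ h ∈ Icc 1 p, x (q * p + h)) ^ 2 ≤ (p : ℝ) * G := by
      calc (∑ h ∈ Icc 1 p, x (q * p + h)) ^ 2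
          ≤ (Icc 1 p).card * ∑ h ∈ Icc 1 p, (x (q * p + h)) ^ 2 :=
            sq_sum_le_card_mul_sum_sq
        _ ≤ (p : ℝ) * G := by
            rw [Nat.card_Icc]
            simp only [Nat.add_sub_cancel]
            exact mul_le_mul_of_nonneg_left (hgrp q hq) (by positivity)
    have h2 : ((p : ℝ) * G) = ((p:ℝ) * Real.sqrt (G / p)) ^ 2 := by
      rw [mul_pow, Real.sq_sqrt (by positivity)]
      field_simp
    have h3 : ∑ h ∈ Icc 1 p, x (q * p + h) ≤ Real.sqrt ((p:ℝ) * G) :=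
      (Real.le_sqrt hnn (by positivity)).mpr h1
    calc ∑ h ∈ Icc 1 p, x (q * p + h) ≤ Real.sqrt ((p:ℝ) * G) := h3
      _ = (p:ℝ) * Real.sqrt (G / p) := by
          rw [h2, Real.sqrt_sq (by positivity)]
  -- total uncertainty bound over all N episodes, by induction on groups
  have hxsum : ∀ q ≤ Q, ∑ n ∈ Ioc 0 (q * p), x n ≤ (q : ℝ) * ((p:ℝ) * Real.sqrt (G / p)) := by
    intro q hq
    induction q with
    | zero => simp
    | succ k ih =>
      have hk : k ≤ Q := Nat.le_of_succ_le hq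
      have hsplit : (∑ n ∈ Ioc 0 (k * p), x n) + ∑ n ∈ Ioc (k * p) ((k+1) * p), x n
          = ∑ n ∈ Ioc 0 ((k+1) * p), x n :=
        Finset.sum_Ioc_consecutive _ (Nat.zero_le _) (by nlinarith)
      have hshift : ∑ n ∈ Ioc (k * p) ((k+1) * p), x n = ∑ h ∈ Icc 1 p, x (k * p + h) := by
        have : Ioc (k * p) ((k+1) * p) = (Ioc 0 p).map (addLeftEmbedding (k * p)) := by
          rw [map_add_left_Ioc]
          congr 1 <;> ring
        rw [this, Finset.sum_map]
        have : Ioc 0 p = Icc 1 p := by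
          ext a; simp [Nat.lt_iff_add_one_le]
        rw [this]
        rfl
      rw [← hsplit, hshift]
      push_cast
      have := hgroup k (Nat.lt_of_lt_of_le (Nat.lt_succ_self k) hq)
      have := ih hk
      nlinarith
  -- drift double-sum bound: each drift term is counted at most p times
  have hdsum : ∑ n ∈ Icc 1 N, ∑ s ∈ Icc (m n) (n - 1), d s ≤ (p : ℝ) * P := by
    have key : ∀ n ∈ Icc 1 N, ∑ s ∈ Icc (m n) (n - 1), d s
        = ∑ s ∈ Icc 1 (N - 1), if s ∈ Icc (m n) (n - 1) then d s else 0 := by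
      intro n hn
      rw [Finset.mem_Icc] at hn
      obtain ⟨hm1, hm2, _⟩ := hm n hn.1 hn.2
      rw [Finset.sum_ite_mem, Finset.inter_eq_right.mpr]
      intro s hs
      rw [Finset.mem_Icc] at hs ⊢
      exact ⟨le_trans hm1 hs.1, le_trans hs.2 (Nat.sub_le_sub_right hn.2 1)⟩
    rw [Finset.sum_congr rfl key, Finset.sum_comm]
    have inner : ∀ s ∈ Icc 1 (N - 1),
        ∑ n ∈ Icc 1 N, (if s ∈ Icc (m n) (n - 1) then d s else 0) ≤ (p : ℝ) * d s := by
      intro s hs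
      rw [Finset.mem_Icc] at hs
      rw [← Finset.sum_filter, Finset.sum_const, nsmul_eq_mul]
      have hsub : (Icc 1 N).filter (fun n => s ∈ Icc (m n) (n - 1)) ⊆ Icc (s + 1) (s + p) := by
        intro n hn
        rw [Finset.mem_filter, Finset.mem_Icc, Finset.mem_Icc] at hn
        obtain ⟨⟨hn1, hn2⟩, hms, hsn⟩ := hn
        obtain ⟨_, _, hwin⟩ := hm n hn1 hn2
        rw [Finset.mem_Icc]
        constructor
        · omega
        · omega
      have hcard : ((Icc 1 N).filter (fun n => s ∈ Icc (m n) (n - 1))).card ≤ p := by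
        have := Finset.card_le_card hsub
        rw [Nat.card_Icc] at this
        omega
      exact mul_le_mul_of_nonneg_right (by exact_mod_cast hcard) (hd s)
    calc ∑ s ∈ Icc 1 (N - 1), ∑ n ∈ Icc 1 N, (if s ∈ Icc (m n) (n - 1) then d s else 0)
        ≤ ∑ s ∈ Icc 1 (N - 1), (p : ℝ) * d s := Finset.sum_le_sum inner
      _ = (p : ℝ) * ∑ s ∈ Icc 1 (N - 1), d s := by rw [Finset.mul_sum]
      _ ≤ (p : ℝ) * P := mul_le_mul_of_nonneg_left hdP (by positivity)
  -- combine everything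
  have hxtot : ∑ n ∈ Icc 1 N, x n ≤ (N : ℝ) * Real.sqrt (G / p) := by
    have h1 : Icc 1 N = Ioc 0 N := by ext a; simp [Nat.lt_iff_add_one_le]
    have := hxsum Q le_rfl
    rw [h1, hN]
    calc ∑ n ∈ Ioc 0 (Q * p), x n ≤ (Q : ℝ) * ((p:ℝ) * Real.sqrt (G / p)) := this
      _ = ((Q * p : ℕ) : ℝ) * Real.sqrt (G / p) := by push_cast; ring
  calc ∑ n ∈ Icc 1 N, r n
      ≤ ∑ n ∈ Icc 1 N, ((lam ^ 2 + 2 * lam) * x n +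
          (lam + 2) * c * ∑ s ∈ Icc (m n) (n - 1), d s) := by
        apply Finset.sum_le_sum
        intro n hn
        rw [Finset.mem_Icc] at hn
        exact hr n hn.1 hn.2
    _ = (lam ^ 2 + 2 * lam) * ∑ n ∈ Icc 1 N, x n +
          (lam + 2) * c * ∑ n ∈ Icc 1 N, ∑ s ∈ Icc (m n) (n - 1), d s := by
        rw [Finset.sum_add_distrib, ← Finset.mul_sum, ← Finset.mul_sum]
    _ ≤ (lam ^ 2 + 2 * lam) * ((N : ℝ) * Real.sqrt (G / p)) +
          (lam + 2) * c * ((p : ℝ) * P) := by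
        gcongr <;> positivity
    _ = (lam ^ 2 + 2 * lam) * (N : ℝ) * Real.sqrt (G / p) +
          (lam + 2) * c * (p : ℝ) * P := by ring
end
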